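/- The higher cardinality |BC_p|_{KU_p} equals 1 in π_0(KU_p) ≅ Z_p; consequently, since the map π_0(S_{K(1)}) → π_0(KU_p) exhibits the target as the quotient of the source by its nilradical, the cardinality |BC_p|_{S_{K(1)}} is a unit in π_0(S_{K(1)}). -/
import Mathlib

/-!
STATEMENT 1: `|BC_p|_{KU_p} = 1` in `π₀(KU_p) ≅ ℤ_p`; consequently, since
`π₀(S_{K(1)}) → π₀(KU_p)` exhibits the target as the quotient of the source by
its nilradical, the cardinality `|BC_p|_{S_{K(1)}}` is a unit in `π₀(S_{K(1)})`.

We model the cardinality calculus abstractly as in the paper, with the inputs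
`dim(KU_p^{BC_p}) = |BC_p|_{KU_p}·|C_p|_{KU_p}`, `dim(KU_p^{BC_p}) = p`,
`|C_p|_{KU_p} = p`, and a surjective ring map `π₀(S_{K(1)}) → ℤ_p` with
nilpotent kernel carrying `|BC_p|_{S_{K(1)}}` to `|BC_p|_{KU_p}`. -/
structure CardinalityCalculus (R : Type*) [CommRing R] where
  /-- pointed connected π-finite 1-truncated spaces -/
  Space : Type*
  /-- the based loop space `Ω` -/
  loop : Space → Space
  /-- the higher cardinality `|A|_R ∈ π₀ R` -/
  card : Space → R
  /-- the dimension `dim(R^A) ∈ π₀ R` -/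
  dimFn : Space → R

theorem card_BCp_eq_one_and_unit (p : ℕ) [Fact p.Prime]
    -- the cardinality calculus of `KU_p`, with `π₀(KU_p) ≅ ℤ_p`
    (KUp : CardinalityCalculus ℤ_[p]) (BCp : KUp.Space)
    -- `dim(KU_p^{BC_p}) = |BC_p|_{KU_p} · |C_p|_{KU_p}` (here `C_p = Ω BC_p`)
    (hdim : KUp.dimFn BCp = KUp.card BCp * KUp.card (KUp.loop BCp))
    -- `dim(KU_p^{BC_p}) = p`
    (hd : KUp.dimFn BCp = (p : ℤ_[p]))
    -- `|C_p|_{KU_p} = p`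
    (hc : KUp.card (KUp.loop BCp) = (p : ℤ_[p]))
    -- `π₀` of the K(1)-local sphere and the map `π₀(S_{K(1)}) → π₀(KU_p)`,
    -- surjective with nilpotent kernel (the quotient by the nilradical)
    (S : Type*) [CommRing S] (f : S →+* ℤ_[p])
    (hsurj : Function.Surjective f)
    (hker : ∀ x : S, f x = 0 → IsNilpotent x)
    -- `|BC_p|_{S_{K(1)}}`, mapping to `|BC_p|_{KU_p}`
    (b : S) (hb : f b = KUp.card BCp) :
    KUp.card BCp = 1 ∧ IsUnit b := by
  have hp : (p : ℤ_[p]) ≠ 0 := by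
    exact_mod_cast Nat.cast_ne_zero.mpr (Fact.out (p := p.Prime)).ne_zero
  have hcard : KUp.card BCp = 1 := by
    have h : KUp.card BCp * (p : ℤ_[p]) = 1 * (p : ℤ_[p]) := by
      rw [one_mul, ← hc, ← hdim, hd, hc]
    exact mul_right_cancel₀ hp h
  refine ⟨hcard, ?_⟩
  have hnil : IsNilpotent (b - 1) := by
    apply hker
    rw [map_sub, hb, hcard, map_one, sub_self]
  have : IsUnit (1 + (b - 1)) := IsNilpotent.isUnit_one_add hnil
  simpa using this
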